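/- Let K be a symmetric positive definite kernel on compact Ω ⊂ ℝᵈ with diagonal Lipschitz constant L. Suppose the first n pivots Zₙ are chosen by global maximum volume pivoting: det(K[Zₙ,Zₙ]) ≥ det(K[B,B]) for every n-point subset B ⊂ Ω. If Ω is contained in a ball of radius R, then the Cholesky residual Rₙ with pivot set Zₙ satisfies ‖Rₙ‖_∞ ≤ 8LR/(n^{1/d} − 1). -/

import Mathlib

/-- A kernel `K` on a set `Ω` is symmetric positive definite if it is symmetric on `Ω`
and every finite kernel matrix at distinct points of `Ω` is positive definite. -/
def IsPDKernel {E : Type*} (Ω : Set E) (K : E → E → ℝ) : Prop :=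
  (∀ x ∈ Ω, ∀ y ∈ Ω, K x y = K y x) ∧
  ∀ (n : ℕ) (p : Fin n → E), Function.Injective p → (∀ i, p i ∈ Ω) →
    ∀ c : Fin n → ℝ, c ≠ 0 → 0 < ∑ i, ∑ j, c i * c j * K (p i) (p j)

/-- The kernel matrix `[K(zᵢ, zⱼ)]` of the points `z`. -/
noncomputable def kernelMatrix {E : Type*} (K : E → E → ℝ) {n : ℕ}
    (z : Fin n → E) : Matrix (Fin n) (Fin n) ℝ :=
  Matrix.of fun i j => K (z i) (z j)

/-- The Cholesky/Nyström residual (Schur complement) with pivot set `z`. -/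
noncomputable def nystromResid {E : Type*} (K : E → E → ℝ) {n : ℕ}
    (z : Fin n → E) : E → E → ℝ :=
  fun x y => K x y -
    dotProduct (fun i => K x (z i))
      ((kernelMatrix K z)⁻¹.mulVec fun i => K (z i) y)

open Matrix Metric MeasureTheory Module
open scoped ENNReal

set_option maxHeartbeats 1000000 in
lemma exists_close_pair {d n : ℕ} (hd : 0 < d) (hn : 1 < n)
    (c : EuclideanSpace ℝ (Fin d)) (R : ℝ)
    (z : Fin n → EuclideanSpace ℝ (Fin d)) (hz : ∀ i, z i ∈ Metric.closedBall c R)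
    (hzinj : Function.Injective z) :
    ∃ i j, i ≠ j ∧ ‖z i - z j‖ ≤ 2 * R / ((n : ℝ) ^ ((1 : ℝ) / (d : ℝ)) - 1) := by
  classical
  have hR : 0 ≤ R := by
    have := hz ⟨0, by omega⟩
    simp only [Metric.mem_closedBall] at this
    exact le_trans dist_nonneg this
  -- the set of distinct pairs
  set s : Finset (Fin n × Fin n) := Finset.univ.filter (fun p => p.1 ≠ p.2) with hs
  have hsne : s.Nonempty := by
    refine ⟨(⟨0, by omega⟩, ⟨1, by omega⟩), ?_⟩
    simp only [hs, Finset.mem_filter, Finset.mem_univ, true_and]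
    simp [Fin.ext_iff]
  obtain ⟨p, hps, hmin⟩ := s.exists_min_image (fun p => dist (z p.1) (z p.2)) hsne
  set q : ℝ := dist (z p.1) (z p.2) with hq
  have hpne : p.1 ≠ p.2 := by
    simpa only [hs, Finset.mem_filter, Finset.mem_univ, true_and] using hps
  have hqpos : 0 < q := dist_pos.2 fun h => hpne (hzinj h)
  have hqle : ∀ i j, i ≠ j → q ≤ dist (z i) (z j) := by
    intro i j hij
    have hmem : (i, j) ∈ s := by
      simp only [hs, Finset.mem_filter, Finset.mem_univ, true_and]; exact hij
    exact hmin (i, j) hmem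
  -- disjoint balls
  have hdisj : Pairwise fun i j => Disjoint (ball (z i) (q / 2)) (ball (z j) (q / 2)) := by
    intro i j hij
    apply Metric.ball_disjoint_ball
    linarith [hqle i j hij]
  have hsub : ∀ i, ball (z i) (q / 2) ⊆ closedBall c (R + q / 2) := by
    intro i x hx
    simp only [mem_ball] at hx
    simp only [mem_closedBall]
    have h1 : dist (z i) c ≤ R := hz i
    calc dist x c ≤ dist x (z i) + dist (z i) c := dist_triangle _ _ _
      _ ≤ q / 2 + R := by linarith [hx.le]
      _ = R + q / 2 := by ring
  have hfr : finrank ℝ (EuclideanSpace ℝ (Fin d)) = d := finrank_euclideanSpace_fin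
  have hvol : (n : ℝ≥0∞) * (ENNReal.ofReal ((q/2) ^ d) * volume (ball (0 : EuclideanSpace ℝ (Fin d)) 1))
      ≤ ENNReal.ofReal ((R + q/2) ^ d) * volume (ball (0 : EuclideanSpace ℝ (Fin d)) 1) := by
    have hun : volume (⋃ i, ball (z i) (q/2)) = ∑ i : Fin n, volume (ball (z i) (q/2)) := by
      rw [measure_iUnion hdisj (fun i => measurableSet_ball), tsum_fintype]
    have hball : ∀ i : Fin n, volume (ball (z i) (q/2))
        = ENNReal.ofReal ((q/2) ^ d) * volume (ball (0 : EuclideanSpace ℝ (Fin d)) 1) := by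
      intro i
      rw [Measure.addHaar_ball_of_pos volume (z i) (by linarith : (0:ℝ) < q/2), hfr]
    have hbig : volume (closedBall c (R + q/2))
        = ENNReal.ofReal ((R + q/2) ^ d) * volume (ball (0 : EuclideanSpace ℝ (Fin d)) 1) := by
      rw [Measure.addHaar_closedBall volume c (by linarith : (0:ℝ) ≤ R + q/2), hfr]
    calc (n : ℝ≥0∞) * (ENNReal.ofReal ((q/2) ^ d) * volume (ball (0 : EuclideanSpace ℝ (Fin d)) 1))
        = ∑ i : Fin n, volume (ball (z i) (q/2)) := by
          simp [hball, Finset.sum_const, nsmul_eq_mul]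
      _ = volume (⋃ i, ball (z i) (q/2)) := hun.symm
      _ ≤ volume (closedBall c (R + q/2)) := measure_mono (Set.iUnion_subset hsub)
      _ = _ := hbig
  -- cancel the unit ball volume
  have hV0 : volume (ball (0 : EuclideanSpace ℝ (Fin d)) 1) ≠ 0 :=
    (measure_ball_pos volume _ one_pos).ne'
  have hVtop : volume (ball (0 : EuclideanSpace ℝ (Fin d)) 1) ≠ ⊤ :=
    measure_ball_lt_top.ne
  have hvol2 : (n : ℝ≥0∞) * ENNReal.ofReal ((q/2) ^ d) ≤ ENNReal.ofReal ((R + q/2) ^ d) := by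
    rw [← mul_assoc] at hvol
    exact (ENNReal.mul_le_mul_iff_left hV0 hVtop).1 hvol
  have hreal : (n : ℝ) * (q/2) ^ d ≤ (R + q/2) ^ d := by
    have : ENNReal.ofReal ((n : ℝ) * (q/2) ^ d) ≤ ENNReal.ofReal ((R + q/2) ^ d) := by
      rw [ENNReal.ofReal_mul (by positivity)]
      rw [ENNReal.ofReal_natCast] at *
      exact hvol2
    exact (ENNReal.ofReal_le_ofReal_iff (by positivity)).1 this
  -- take d-th roots
  have hd' : (d : ℝ) ≠ 0 := Nat.cast_ne_zero.2 hd.ne'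
  have hdinv : (0 : ℝ) < 1 / d := by positivity
  have hroot : (n : ℝ) ^ ((1:ℝ)/d) * (q/2) ≤ R + q/2 := by
    have h1 : ((n : ℝ) * (q/2) ^ d) ^ ((1:ℝ)/d) ≤ ((R + q/2) ^ d) ^ ((1:ℝ)/d) :=
      Real.rpow_le_rpow (by positivity) hreal hdinv.le
    have h2 : ((n : ℝ) * (q/2) ^ d) ^ ((1:ℝ)/d) = (n : ℝ) ^ ((1:ℝ)/d) * (q/2) := by
      rw [Real.mul_rpow (by positivity) (by positivity), ← Real.rpow_natCast (q/2) d,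
        ← Real.rpow_mul (by linarith)]
      rw [mul_one_div, div_self hd', Real.rpow_one]
    have h3 : ((R + q/2) ^ d) ^ ((1:ℝ)/d) = R + q/2 := by
      rw [← Real.rpow_natCast (R + q/2) d, ← Real.rpow_mul (by linarith)]
      rw [mul_one_div, div_self hd', Real.rpow_one]
    rw [h2, h3] at h1
    exact h1
  have hgt1 : 1 < (n : ℝ) ^ ((1:ℝ)/d) := by
    apply Real.one_lt_rpow_iff_of_pos (by positivity) |>.2
    exact Or.inl ⟨by exact_mod_cast hn, hdinv⟩
  have hqbound : q ≤ 2 * R / ((n : ℝ) ^ ((1:ℝ)/d) - 1) := by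
    rw [le_div_iff₀ (by linarith)]
    nlinarith [hroot]
  refine ⟨p.1, p.2, hpne, ?_⟩
  rw [← dist_eq_norm]
  exact hqbound

lemma psd_of_pdkernel {E : Type*} {Ω : Set E} {K : E → E → ℝ} (hK : IsPDKernel Ω K)
    {ι : Type*} [Fintype ι] (p : ι → E) (hp : ∀ i, p i ∈ Ω) (c : ι → ℝ) :
    0 ≤ ∑ i, ∑ j, c i * c j * K (p i) (p j) := by
  classical
  set s : Finset E := Finset.univ.image p with hs
  set C : E → ℝ := fun e => ∑ i ∈ Finset.univ.filter (fun i => p i = e), c i with hC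
  have key : ∀ g : E → ℝ, ∑ i, c i * g (p i) = ∑ e ∈ s, C e * g e := by
    intro g
    rw [hs, Finset.sum_image' (fun i => c i * g (p i))]
    · intro i _
      rw [hC]
      rw [Finset.sum_mul]
      apply Finset.sum_congr rfl
      intro j hj
      have : p j = p i := by simpa using hj
      rw [this]
  have hmain : ∑ i, ∑ j, c i * c j * K (p i) (p j) = ∑ e ∈ s, ∑ f ∈ s, C e * C f * K e f := by
    have h1 : ∀ i, ∑ j, c i * c j * K (p i) (p j) = c i * ∑ j, c j * K (p i) (p j) := by
      intro i; rw [Finset.mul_sum]; apply Finset.sum_congr rfl; intro j _; ring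
    simp_rw [h1]
    rw [key (fun x => ∑ j, c j * K x (p j))]
    apply Finset.sum_congr rfl
    intro e _
    rw [key (fun y => K e y), Finset.mul_sum]
    apply Finset.sum_congr rfl
    intro f _
    ring
  rw [hmain]
  -- enumerate s
  set m := s.card with hm
  set ε : s ≃ Fin m := s.equivFin with hε
  have hconv : ∀ h : E → ℝ, ∑ e ∈ s, h e = ∑ k : Fin m, h (ε.symm k : E) := by
    intro h
    rw [← Finset.sum_coe_sort s h]
    exact (Equiv.sum_comp ε.symm (fun a : s => h a)).symm
  have hmain2 : ∑ e ∈ s, ∑ f ∈ s, C e * C f * K e f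
      = ∑ k : Fin m, ∑ l : Fin m, C (ε.symm k : E) * C (ε.symm l : E) * K (ε.symm k : E) (ε.symm l : E) := by
    rw [hconv (fun e => ∑ f ∈ s, C e * C f * K e f)]
    apply Finset.sum_congr rfl
    intro k _
    exact hconv (fun f => C (ε.symm k : E) * C f * K (ε.symm k : E) f)
  rw [hmain2]
  set p' : Fin m → E := fun k => (ε.symm k : E) with hp'
  have hp'inj : Function.Injective p' := by
    intro a b hab
    exact (Equiv.injective ε.symm) (Subtype.coe_injective hab)
  have hp'Ω : ∀ k, p' k ∈ Ω := by
    intro k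
    obtain ⟨i, _, hi⟩ := Finset.mem_image.1 (ε.symm k).2
    show (ε.symm k : E) ∈ Ω
    rw [← hi]
    exact hp i
  set c' : Fin m → ℝ := fun k => C (p' k) with hc'
  by_cases hc0 : c' = 0
  · have : ∀ k l : Fin m, C (ε.symm k : E) * C (ε.symm l : E) * K (ε.symm k : E) (ε.symm l : E) = 0 := by
      intro k l
      have : c' k = 0 := by rw [hc0]; rfl
      rw [hc', hp'] at this
      simp [this]
    simp only [this, Finset.sum_const_zero]
    exact le_refl 0
  · exact le_of_lt (hK.2 m p' hp'inj hp'Ω c' hc0)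

lemma dot_mulVec_symm {m : ℕ} {A : Matrix (Fin m) (Fin m) ℝ} (hAs : Aᵀ = A)
    (x y : Fin m → ℝ) : x ⬝ᵥ A.mulVec y = y ⬝ᵥ A.mulVec x := by
  rw [Matrix.dotProduct_mulVec, ← Matrix.mulVec_transpose, hAs, dotProduct_comm]

lemma quad_min_le {m : ℕ} (A : Matrix (Fin m) (Fin m) ℝ) (hAs : Aᵀ = A)
    (hpsd : ∀ v, 0 ≤ v ⬝ᵥ A.mulVec v) (hinv : IsUnit A.det)
    (k : Fin m → ℝ) (K0 : ℝ) (v : Fin m → ℝ) :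
    K0 - k ⬝ᵥ A⁻¹.mulVec k ≤ K0 - 2 * (k ⬝ᵥ v) + v ⬝ᵥ A.mulVec v := by
  set u : Fin m → ℝ := A⁻¹.mulVec k with hu
  have hAu : A.mulVec u = k := by
    rw [hu, Matrix.mulVec_mulVec, Matrix.mul_nonsing_inv A hinv, Matrix.one_mulVec]
  have h1 : u ⬝ᵥ A.mulVec v = v ⬝ᵥ k := by
    rw [dot_mulVec_symm hAs, hAu]
  have h2 : u ⬝ᵥ A.mulVec u = k ⬝ᵥ A⁻¹.mulVec k := by
    rw [hAu]  -- u ⬝ᵥ k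
    rw [dotProduct_comm]
  have h3 : v ⬝ᵥ A.mulVec u = v ⬝ᵥ k := by rw [hAu]
  have hw := hpsd (v - u)
  have hexp : (v - u) ⬝ᵥ A.mulVec (v - u)
      = v ⬝ᵥ A.mulVec v - 2 * (v ⬝ᵥ k) + k ⬝ᵥ A⁻¹.mulVec k := by
    rw [Matrix.mulVec_sub, dotProduct_sub, sub_dotProduct, sub_dotProduct,
      h1, h2, h3]
    ring
  rw [hexp] at hw
  have hkv : k ⬝ᵥ v = v ⬝ᵥ k := dotProduct_comm _ _
  linarith

lemma finSumFinEquiv_symm_castSucc {m : ℕ} (j : Fin m) :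
    (finSumFinEquiv (n := 1)).symm j.castSucc = Sum.inl j :=
  finSumFinEquiv_symm_apply_castAdd j

lemma det_kernel_snoc {E : Type*} (K : E → E → ℝ) {m : ℕ} (w : Fin m → E) (y : E)
    [Invertible (kernelMatrix K w)] :
    (kernelMatrix K (Fin.snoc w y)).det
      = (kernelMatrix K w).det *
        (K y y - (fun j => K y (w j)) ⬝ᵥ (kernelMatrix K w)⁻¹.mulVec (fun j => K (w j) y)) := by
  set A := kernelMatrix K w with hA
  set B : Matrix (Fin m) (Fin 1) ℝ := Matrix.of fun i _ => K (w i) y with hB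
  set C : Matrix (Fin 1) (Fin m) ℝ := Matrix.of fun _ j => K y (w j) with hC
  set D : Matrix (Fin 1) (Fin 1) ℝ := Matrix.of fun _ _ => K y y with hD
  have hblock : kernelMatrix K (Fin.snoc w y)
      = (Matrix.fromBlocks A B C D).submatrix finSumFinEquiv.symm finSumFinEquiv.symm := by
    ext i j
    induction i using Fin.lastCases with
    | last =>
      induction j using Fin.lastCases with
      | last =>
        simp [kernelMatrix, hA, hB, hC, hD, Fin.snoc_last, Matrix.submatrix_apply, finSumFinEquiv_symm_last, finSumFinEquiv_symm_castSucc, Matrix.fromBlocks_apply₁₁, Matrix.fromBlocks_apply₁₂, Matrix.fromBlocks_apply₂₁, Matrix.fromBlocks_apply₂₂]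
      | cast j' =>
        simp [kernelMatrix, hA, hB, hC, hD, Fin.snoc_last, Fin.snoc_castSucc,
          Matrix.submatrix_apply, finSumFinEquiv_symm_last, finSumFinEquiv_symm_castSucc, Matrix.fromBlocks_apply₁₁, Matrix.fromBlocks_apply₁₂, Matrix.fromBlocks_apply₂₁, Matrix.fromBlocks_apply₂₂]
    | cast i' =>
      induction j using Fin.lastCases with
      | last =>
        simp [kernelMatrix, hA, hB, hC, hD, Fin.snoc_last, Fin.snoc_castSucc,
          Matrix.submatrix_apply, finSumFinEquiv_symm_last, finSumFinEquiv_symm_castSucc, Matrix.fromBlocks_apply₁₁, Matrix.fromBlocks_apply₁₂, Matrix.fromBlocks_apply₂₁, Matrix.fromBlocks_apply₂₂]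
      | cast j' =>
        simp [kernelMatrix, hA, hB, hC, hD, Fin.snoc_castSucc, Matrix.submatrix_apply, finSumFinEquiv_symm_last, finSumFinEquiv_symm_castSucc, Matrix.fromBlocks_apply₁₁, Matrix.fromBlocks_apply₁₂, Matrix.fromBlocks_apply₂₁, Matrix.fromBlocks_apply₂₂]
  rw [hblock, Matrix.det_submatrix_equiv_self, Matrix.det_fromBlocks₁₁]
  congr 1
  rw [Matrix.det_fin_one]
  simp only [Matrix.sub_apply, hD, Matrix.of_apply]
  congr 1
  have h1 : (C * A⁻¹ * B) 0 0 = ∑ j : Fin m, ∑ x : Fin m, K y (w x) * (A⁻¹ x j * K (w j) y) := by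
    simp only [Matrix.mul_apply, hB, hC, Matrix.of_apply, Finset.sum_mul, mul_assoc]
  have h2 : (fun j => K y (w j)) ⬝ᵥ A⁻¹.mulVec (fun j => K (w j) y)
      = ∑ x : Fin m, ∑ j : Fin m, K y (w x) * (A⁻¹ x j * K (w j) y) := by
    simp only [dotProduct, Matrix.mulVec, Finset.mul_sum]
  rw [Matrix.invOf_eq_nonsing_inv, h1, h2, Finset.sum_comm]

-- quadratic form of a kernel matrix
lemma kernel_quadform {E : Type*} (K : E → E → ℝ) {m : ℕ} (z : Fin m → E) (v : Fin m → ℝ) :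
    v ⬝ᵥ (kernelMatrix K z).mulVec v = ∑ i, ∑ j, v i * v j * K (z i) (z j) := by
  simp only [dotProduct, Matrix.mulVec, kernelMatrix, Matrix.of_apply, Finset.mul_sum]
  apply Finset.sum_congr rfl; intro i _
  apply Finset.sum_congr rfl; intro j _
  ring

lemma kernel_transpose {E : Type*} {Ω : Set E} {K : E → E → ℝ} (hK : IsPDKernel Ω K)
    {m : ℕ} {z : Fin m → E} (hz : ∀ i, z i ∈ Ω) :
    (kernelMatrix K z)ᵀ = kernelMatrix K z := by
  ext i j
  exact hK.1 (z j) (hz j) (z i) (hz i)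

lemma kernel_psd {E : Type*} {Ω : Set E} {K : E → E → ℝ} (hK : IsPDKernel Ω K)
    {m : ℕ} {z : Fin m → E} (hz : ∀ i, z i ∈ Ω) (v : Fin m → ℝ) :
    0 ≤ v ⬝ᵥ (kernelMatrix K z).mulVec v := by
  rw [kernel_quadform]
  exact psd_of_pdkernel hK z hz v

lemma kernel_det_pos {E : Type*} {Ω : Set E} {K : E → E → ℝ} (hK : IsPDKernel Ω K)
    {m : ℕ} {z : Fin m → E} (hz : ∀ i, z i ∈ Ω) (hinj : Function.Injective z) :
    0 < (kernelMatrix K z).det := by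
  have hpd : (kernelMatrix K z).PosDef := by
    rw [Matrix.posDef_iff_dotProduct_mulVec]
    constructor
    · show (kernelMatrix K z)ᴴ = kernelMatrix K z
      ext i j
      simp only [Matrix.conjTranspose_apply, star_trivial]
      exact hK.1 (z j) (hz j) (z i) (hz i)
    · intro v hv
      have := hK.2 m z hinj hz v hv
      rw [← kernel_quadform K z v] at this
      simpa using this
  exact hpd.det_pos

lemma kernel_isUnit_det {E : Type*} {Ω : Set E} {K : E → E → ℝ} (hK : IsPDKernel Ω K)
    {m : ℕ} {z : Fin m → E} (hz : ∀ i, z i ∈ Ω) (hinj : Function.Injective z) :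
    IsUnit (kernelMatrix K z).det :=
  isUnit_iff_ne_zero.2 (kernel_det_pos hK hz hinj).ne'


set_option maxHeartbeats 1000000 in
lemma diag_bound {d n : ℕ} (hd : 0 < d) (hn : 1 < n)
    (Ω : Set (EuclideanSpace ℝ (Fin d)))
    (c : EuclideanSpace ℝ (Fin d)) (R : ℝ) (hball : Ω ⊆ Metric.closedBall c R)
    (K : EuclideanSpace ℝ (Fin d) → EuclideanSpace ℝ (Fin d) → ℝ)
    (hK : IsPDKernel Ω K) (L : ℝ) (hL : 0 < L)
    (hLip : ∀ x ∈ Ω, ∀ y ∈ Ω, |K x x - K x y| ≤ L * ‖x - y‖)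
    (z : Fin n → EuclideanSpace ℝ (Fin d)) (hzΩ : ∀ i, z i ∈ Ω)
    (hzinj : Function.Injective z)
    (hmaxvol : ∀ b : Fin n → EuclideanSpace ℝ (Fin d), (∀ i, b i ∈ Ω) →
      (kernelMatrix K b).det ≤ (kernelMatrix K z).det) :
    ∀ x ∈ Ω, nystromResid K z x x ≤ 4 * L * R / ((n : ℝ) ^ ((1 : ℝ) / (d : ℝ)) - 1) := by
  intro x hx
  obtain ⟨i, j, hij, hdist⟩ := exists_close_pair hd hn c R z (fun i => hball (hzΩ i)) hzinj
  obtain ⟨m, rfl⟩ : ∃ m, n = m + 1 := ⟨n - 1, by omega⟩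
  set A := kernelMatrix K z with hA
  have hAs : Aᵀ = A := kernel_transpose hK hzΩ
  have hApsd := kernel_psd hK hzΩ
  have hAdet : IsUnit A.det := kernel_isUnit_det hK hzΩ hzinj
  set w : Fin m → EuclideanSpace ℝ (Fin d) := fun t => z (i.succAbove t) with hw
  have hwΩ : ∀ t, w t ∈ Ω := fun t => hzΩ _
  have hwinj : Function.Injective w := fun a b hab =>
    Fin.succAbove_right_injective (hzinj hab)
  set A' := kernelMatrix K w with hA'
  have hA's : A'ᵀ = A' := kernel_transpose hK hwΩ
  have hA'psd := kernel_psd hK hwΩ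
  have hA'detpos : 0 < A'.det := kernel_det_pos hK hwΩ hwinj
  have hA'det : IsUnit A'.det := isUnit_iff_ne_zero.2 hA'detpos.ne'
  haveI : Invertible A' := A'.invertibleOfIsUnitDet hA'det
  -- vectors
  set kx : Fin (m+1) → ℝ := fun t => K x (z t) with hkx
  set k' : Fin m → ℝ := fun t => K x (w t) with hk'
  set k₂ : Fin m → ℝ := fun t => K (z i) (w t) with hk₂
  have hRxx : nystromResid K z x x = K x x - kx ⬝ᵥ A⁻¹.mulVec kx := by
    have hcol : (fun t => K (z t) x) = kx := by
      funext t; exact hK.1 (z t) (hzΩ t) x hx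
    rw [nystromResid, ← hA, hcol]
  -- Step 1 : monotonicity
  set u' : Fin m → ℝ := A'⁻¹.mulVec k' with hu'
  set v : Fin (m+1) → ℝ := i.insertNth 0 u' with hv
  have hv0 : v i = 0 := by simp [hv]
  have hva : ∀ a, v (i.succAbove a) = u' a := by
    intro a; simp [hv]
  have hsplit1 : kx ⬝ᵥ v = k' ⬝ᵥ u' := by
    rw [dotProduct, dotProduct, Fin.sum_univ_succAbove (fun t => kx t * v t) i]
    simp only [hv0, mul_zero, zero_add, hva]
    rfl
  have hsplit2 : v ⬝ᵥ A.mulVec v = u' ⬝ᵥ A'.mulVec u' := by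
    rw [hA, hA', kernel_quadform K z v, kernel_quadform K w u',
      Fin.sum_univ_succAbove (fun t => ∑ s, v t * v s * K (z t) (z s)) i]
    simp only [hv0, zero_mul, Finset.sum_const_zero, zero_add]
    apply Finset.sum_congr rfl
    intro a _
    rw [Fin.sum_univ_succAbove (fun s => v (i.succAbove a) * v s * K (z (i.succAbove a)) (z s)) i]
    simp only [hv0, mul_zero, zero_mul, zero_add, hva]
    rfl
  have hA'u : A'.mulVec u' = k' := by
    rw [hu', Matrix.mulVec_mulVec, Matrix.mul_nonsing_inv _ hA'det, Matrix.one_mulVec]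
  have step1 : nystromResid K z x x ≤ K x x - k' ⬝ᵥ A'⁻¹.mulVec k' := by
    have h := quad_min_le A hAs hApsd hAdet kx (K x x) v
    rw [hsplit1, hsplit2] at h
    rw [hRxx]
    have h2 : u' ⬝ᵥ A'.mulVec u' = k' ⬝ᵥ A'⁻¹.mulVec k' := by
      rw [hA'u, dotProduct_comm, hu']
    have h3 : k' ⬝ᵥ u' = k' ⬝ᵥ A'⁻¹.mulVec k' := by rw [hu']
    rw [h2, h3] at h
    linarith
  -- Step 2 : determinant identity at x
  have hdetx : (kernelMatrix K (Fin.snoc w x)).det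
      = A'.det * (K x x - k' ⬝ᵥ A'⁻¹.mulVec k') := by
    have hcol : (fun t => K (w t) x) = k' := by
      funext t
      rw [hk']
      exact hK.1 (w t) (hwΩ t) x hx
    rw [det_kernel_snoc K w x, hcol, show (fun t => K x (w t)) = k' from hk'.symm]
  -- Step 3 : maxvol
  have hmax1 : (kernelMatrix K (Fin.snoc w x)).det ≤ A.det := by
    apply hmaxvol
    intro t
    induction t using Fin.lastCases with
    | last => rw [Fin.snoc_last]; exact hx
    | cast t' => rw [Fin.snoc_castSucc]; exact hwΩ t'
  -- Step 4 : permutation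
  set f : Fin (m+1) → Fin (m+1) := Fin.snoc i.succAbove i with hf
  have hfinj : Function.Injective f := by
    intro a b hab
    induction a using Fin.lastCases with
    | last =>
      induction b using Fin.lastCases with
      | last => rfl
      | cast b' =>
        exfalso
        rw [hf, Fin.snoc_last, Fin.snoc_castSucc] at hab
        exact (Fin.succAbove_ne i b') hab.symm
    | cast a' =>
      induction b using Fin.lastCases with
      | last =>
        exfalso
        rw [hf, Fin.snoc_last, Fin.snoc_castSucc] at hab
        exact (Fin.succAbove_ne i a') hab
      | cast b' =>
        rw [hf, Fin.snoc_castSucc, Fin.snoc_castSucc] at hab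
        rw [Fin.succAbove_right_injective hab]
  have hfbij : Function.Bijective f := Finite.injective_iff_bijective.1 hfinj
  set e : Fin (m+1) ≃ Fin (m+1) := Equiv.ofBijective f hfbij with he
  have hzf : Fin.snoc w (z i) = fun a => z (f a) := by
    funext a
    induction a using Fin.lastCases with
    | last => rw [Fin.snoc_last, hf, Fin.snoc_last]
    | cast a' => rw [Fin.snoc_castSucc, hf, Fin.snoc_castSucc, hw]
  have hdeteq : (kernelMatrix K (Fin.snoc w (z i))).det = A.det := by
    have hsub : kernelMatrix K (Fin.snoc w (z i)) = A.submatrix e e := by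
      ext a b
      simp only [hA, kernelMatrix, Matrix.submatrix_apply, Matrix.of_apply, hzf, he,
        Equiv.ofBijective_apply]
    rw [hsub, Matrix.det_submatrix_equiv_self]
  -- Step 5 : determinant identity at z i
  have hdetzi : (kernelMatrix K (Fin.snoc w (z i))).det
      = A'.det * (K (z i) (z i) - k₂ ⬝ᵥ A'⁻¹.mulVec k₂) := by
    have hcol : (fun t => K (w t) (z i)) = k₂ := by
      funext t
      rw [hk₂]
      exact hK.1 (w t) (hwΩ t) (z i) (hzΩ i)
    rw [det_kernel_snoc K w (z i), hcol, show (fun t => K (z i) (w t)) = k₂ from hk₂.symm]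
  -- combine det chain
  have step2 : K x x - k' ⬝ᵥ A'⁻¹.mulVec k' ≤ K (z i) (z i) - k₂ ⬝ᵥ A'⁻¹.mulVec k₂ := by
    have hchain : A'.det * (K x x - k' ⬝ᵥ A'⁻¹.mulVec k')
        ≤ A'.det * (K (z i) (z i) - k₂ ⬝ᵥ A'⁻¹.mulVec k₂) := by
      rw [← hdetx, ← hdetzi]
      exact le_trans hmax1 hdeteq.ge
    exact le_of_mul_le_mul_left hchain hA'detpos
  -- Step 6 : pivot to nearest neighbour
  obtain ⟨j', hj'⟩ := Fin.exists_succAbove_eq (show j ≠ i from hij.symm)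
  have hwj' : w j' = z j := by simp only [hw]; rw [hj']
  have step3 : K (z i) (z i) - k₂ ⬝ᵥ A'⁻¹.mulVec k₂
      ≤ K (z i) (z i) - 2 * K (z i) (z j) + K (z j) (z j) := by
    have h := quad_min_le A' hA's hA'psd hA'det k₂ (K (z i) (z i)) (Pi.single j' 1)
    have hd1 : k₂ ⬝ᵥ Pi.single j' (1:ℝ) = K (z i) (z j) := by
      rw [dotProduct_single, mul_one]
      simp only [hk₂]
      rw [hwj']
    have hd2 : Pi.single j' (1:ℝ) ⬝ᵥ A'.mulVec (Pi.single j' 1) = K (z j) (z j) := by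
      rw [Matrix.mulVec_single, single_dotProduct]
      show 1 * (A' j' j' * 1) = _
      rw [one_mul, mul_one, hA']
      show K (w j') (w j') = _
      rw [hwj']
    rw [hd1, hd2] at h
    exact h
  -- Step 7 : Lipschitz bound
  have hsymij : K (z i) (z j) = K (z j) (z i) := hK.1 (z i) (hzΩ i) (z j) (hzΩ j)
  have h1 := abs_le.1 (hLip (z i) (hzΩ i) (z j) (hzΩ j))
  have h2 := abs_le.1 (hLip (z j) (hzΩ j) (z i) (hzΩ i))
  have hnrm : ‖z j - z i‖ = ‖z i - z j‖ := norm_sub_rev _ _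
  have step4 : K (z i) (z i) - 2 * K (z i) (z j) + K (z j) (z j) ≤ 2 * L * ‖z i - z j‖ := by
    have e1 : K (z i) (z i) - K (z i) (z j) ≤ L * ‖z i - z j‖ := h1.2
    have e2 : K (z j) (z j) - K (z j) (z i) ≤ L * ‖z j - z i‖ := h2.2
    rw [hnrm] at e2
    rw [hsymij] at e1
    linarith [e1, e2, hsymij]
  -- Step 8 : conclude
  have hdenpos : 0 < ((m+1 : ℕ) : ℝ) ^ ((1:ℝ)/(d:ℝ)) - 1 := by
    have : (1:ℝ) < ((m+1 : ℕ) : ℝ) ^ ((1:ℝ)/(d:ℝ)) := by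
      apply Real.one_lt_rpow_iff_of_pos (by positivity) |>.2
      refine Or.inl ⟨by exact_mod_cast hn, by positivity⟩
    linarith
  have hfinal : 2 * L * ‖z i - z j‖
      ≤ 4 * L * R / (((m+1 : ℕ) : ℝ) ^ ((1:ℝ)/(d:ℝ)) - 1) := by
    have := mul_le_mul_of_nonneg_left hdist (by linarith : (0:ℝ) ≤ 2 * L)
    calc 2 * L * ‖z i - z j‖
        ≤ 2 * L * (2 * R / (((m+1 : ℕ) : ℝ) ^ ((1:ℝ)/(d:ℝ)) - 1)) := this
      _ = 4 * L * R / (((m+1 : ℕ) : ℝ) ^ ((1:ℝ)/(d:ℝ)) - 1) := by ring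
  linarith [step1, step2, step3, step4, hfinal]

set_option maxHeartbeats 1000000 in
lemma resid_bound {E : Type*} {Ω : Set E} {K : E → E → ℝ} (hK : IsPDKernel Ω K)
    {n : ℕ} (z : Fin n → E) (hzΩ : ∀ i, z i ∈ Ω) (hzinj : Function.Injective z)
    {x y : E} (hx : x ∈ Ω) (hy : y ∈ Ω) :
    |nystromResid K z x y| ≤ (nystromResid K z x x + nystromResid K z y y) / 2 := by
  classical
  set A := kernelMatrix K z with hA
  have hAs : Aᵀ = A := kernel_transpose hK hzΩ
  have hAdet : IsUnit A.det := kernel_isUnit_det hK hzΩ hzinj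
  have hAis : (A⁻¹)ᵀ = A⁻¹ := by rw [Matrix.transpose_nonsing_inv, hAs]
  set kx : Fin n → ℝ := fun t => K x (z t) with hkx
  set ky : Fin n → ℝ := fun t => K y (z t) with hky
  have hcolx : (fun t => K (z t) x) = kx := funext fun t => hK.1 (z t) (hzΩ t) x hx
  have hcoly : (fun t => K (z t) y) = ky := funext fun t => hK.1 (z t) (hzΩ t) y hy
  have hRxy : nystromResid K z x y = K x y - kx ⬝ᵥ A⁻¹.mulVec ky := by
    rw [nystromResid, ← hA, hcoly]
  have hRxx : nystromResid K z x x = K x x - kx ⬝ᵥ A⁻¹.mulVec kx := by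
    rw [nystromResid, ← hA, hcolx]
  have hRyy : nystromResid K z y y = K y y - ky ⬝ᵥ A⁻¹.mulVec ky := by
    rw [nystromResid, ← hA, hcoly]
  have hsymxy : K y x = K x y := hK.1 y hy x hx
  have hdsym : ky ⬝ᵥ A⁻¹.mulVec kx = kx ⬝ᵥ A⁻¹.mulVec ky := dot_mulVec_symm hAis ky kx
  have key : ∀ a b : ℝ,
      0 ≤ a*a * (K x x - kx ⬝ᵥ A⁻¹.mulVec kx) + 2*a*b*(K x y - kx ⬝ᵥ A⁻¹.mulVec ky)
        + b*b * (K y y - ky ⬝ᵥ A⁻¹.mulVec ky) := by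
    intro a b
    set u : Fin n → ℝ := a • kx + b • ky with hu
    set cw : Fin n → ℝ := -(A⁻¹.mulVec u) with hcw
    set p : Fin n ⊕ Fin 2 → E := Sum.elim z ![x, y] with hp
    set cc : Fin n ⊕ Fin 2 → ℝ := Sum.elim cw ![a, b] with hcc
    have hpΩ : ∀ i, p i ∈ Ω := by
      intro t
      rcases t with t | t
      · exact hzΩ t
      · fin_cases t
        · exact hx
        · exact hy
    have hS := psd_of_pdkernel hK p hpΩ cc
    have hu' : ∀ t, u t = a * kx t + b * ky t := by
      intro t; rw [hu]; simp [smul_eq_mul]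
    have hsplit : ∑ i, ∑ j, cc i * cc j * K (p i) (p j)
        = (cw ⬝ᵥ A.mulVec cw) + (cw ⬝ᵥ u) + (cw ⬝ᵥ u)
          + (a*a * K x x + a*b*K x y + b*a*K y x + b*b * K y y) := by
      rw [Fintype.sum_sum_type]
      have hinner : ∀ i : Fin n, ∑ t : Fin n ⊕ Fin 2, cc (Sum.inl i) * cc t * K (p (Sum.inl i)) (p t)
          = (∑ j : Fin n, cw i * cw j * K (z i) (z j)) + cw i * (a * kx i + b * ky i) := by
        intro i
        rw [Fintype.sum_sum_type]
        congr 1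
        rw [Fin.sum_univ_two]
        simp only [hcc, hp, Sum.elim_inl, Sum.elim_inr, Matrix.cons_val_zero, Matrix.cons_val_one,
          Matrix.head_cons]
        have h1 : K (z i) x = kx i := hK.1 (z i) (hzΩ i) x hx
        have h2 : K (z i) y = ky i := hK.1 (z i) (hzΩ i) y hy
        rw [h1, h2]
        ring
      have houter2 : ∀ t : Fin 2, ∑ s : Fin n ⊕ Fin 2,
          cc (Sum.inr t) * cc s * K (p (Sum.inr t)) (p s)
          = (∑ j : Fin n, cc (Sum.inr t) * cw j * K (p (Sum.inr t)) (z j))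
            + (cc (Sum.inr t) * a * K (p (Sum.inr t)) x + cc (Sum.inr t) * b * K (p (Sum.inr t)) y) := by
        intro t
        rw [Fintype.sum_sum_type]
        congr 1
        rw [Fin.sum_univ_two]
        simp only [hcc, hp, Sum.elim_inl, Sum.elim_inr, Matrix.cons_val_zero, Matrix.cons_val_one,
          Matrix.head_cons]
      simp only [hinner, houter2]
      rw [Fin.sum_univ_two]
      simp only [hcc, hp, Sum.elim_inr, Matrix.cons_val_zero, Matrix.cons_val_one,
        Matrix.head_cons]
      rw [Finset.sum_add_distrib]
      have hq1 : ∑ i : Fin n, cw i * (a * kx i + b * ky i) = cw ⬝ᵥ u := by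
        rw [dotProduct]
        apply Finset.sum_congr rfl
        intro i _
        rw [hu' i]
      have hq2 : cw ⬝ᵥ A.mulVec cw = ∑ i : Fin n, ∑ j : Fin n, cw i * cw j * K (z i) (z j) := by
        rw [hA]; exact kernel_quadform K z cw
      have hq3 : ∑ j : Fin n, a * cw j * K x (z j) = a * (cw ⬝ᵥ kx) := by
        rw [dotProduct, Finset.mul_sum]
        apply Finset.sum_congr rfl
        intro j _
        rw [hkx]
        ring
      have hq4 : ∑ j : Fin n, b * cw j * K y (z j) = b * (cw ⬝ᵥ ky) := by
        rw [dotProduct, Finset.mul_sum]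
        apply Finset.sum_congr rfl
        intro j _
        rw [hky]
        ring
      have hq5 : cw ⬝ᵥ u = a * (cw ⬝ᵥ kx) + b * (cw ⬝ᵥ ky) := by
        rw [dotProduct, dotProduct, dotProduct, Finset.mul_sum,
          Finset.mul_sum, ← Finset.sum_add_distrib]
        apply Finset.sum_congr rfl
        intro i _
        rw [hu' i]
        ring
      rw [hq1, hq2, hq3, hq4, hq5]
      ring
    have hmcw : A.mulVec cw = -u := by
      rw [hcw, Matrix.mulVec_neg, Matrix.mulVec_mulVec, Matrix.mul_nonsing_inv _ hAdet,
        Matrix.one_mulVec]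
    have hcwu : cw ⬝ᵥ u = -(u ⬝ᵥ A⁻¹.mulVec u) := by
      rw [hcw, neg_dotProduct, dotProduct_comm]
    have hT11 : cw ⬝ᵥ A.mulVec cw = -(cw ⬝ᵥ u) := by
      rw [hmcw, dotProduct_neg]
    have hbil : u ⬝ᵥ A⁻¹.mulVec u
        = a*a*(kx ⬝ᵥ A⁻¹.mulVec kx) + a*b*(kx ⬝ᵥ A⁻¹.mulVec ky)
          + a*b*(ky ⬝ᵥ A⁻¹.mulVec kx) + b*b*(ky ⬝ᵥ A⁻¹.mulVec ky) := by
      rw [hu, Matrix.mulVec_add, Matrix.mulVec_smul, Matrix.mulVec_smul,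
        add_dotProduct, smul_dotProduct, smul_dotProduct,
        dotProduct_add, dotProduct_add,
        dotProduct_smul, dotProduct_smul, dotProduct_smul,
        dotProduct_smul]
      simp only [smul_eq_mul]
      ring
    rw [hsplit, hT11, hcwu, hbil] at hS
    rw [hsymxy, hdsym] at hS
    linarith [hS]
  rw [hRxy, hRxx, hRyy]
  rw [abs_le]
  constructor
  · nlinarith [key 1 1]
  · nlinarith [key 1 (-1)]

theorem global_max_volume_pivoting_convergence {d n : ℕ} (hd : 0 < d) (hn : 1 < n)
    (Ω : Set (EuclideanSpace ℝ (Fin d))) (hΩ : IsCompact Ω)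
    (c : EuclideanSpace ℝ (Fin d)) (R : ℝ) (hball : Ω ⊆ Metric.closedBall c R)
    (K : EuclideanSpace ℝ (Fin d) → EuclideanSpace ℝ (Fin d) → ℝ)
    (hK : IsPDKernel Ω K) (L : ℝ) (hL : 0 < L)
    (hLip : ∀ x ∈ Ω, ∀ y ∈ Ω, |K x x - K x y| ≤ L * ‖x - y‖)
    (z : Fin n → EuclideanSpace ℝ (Fin d)) (hzΩ : ∀ i, z i ∈ Ω)
    (hzinj : Function.Injective z)
    -- global maximum volume pivoting: `z` maximizes the kernel matrix determinant
    (hmaxvol : ∀ b : Fin n → EuclideanSpace ℝ (Fin d), (∀ i, b i ∈ Ω) →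
      (kernelMatrix K b).det ≤ (kernelMatrix K z).det) :
    ∀ x ∈ Ω, ∀ y ∈ Ω,
      |nystromResid K z x y| ≤ 8 * L * R / ((n : ℝ) ^ ((1 : ℝ) / (d : ℝ)) - 1) := by
  intro x hx y hy
  have hR : 0 ≤ R := by
    have := hball (hzΩ ⟨0, by omega⟩)
    simp only [Metric.mem_closedBall] at this
    exact le_trans dist_nonneg this
  have hdiag := diag_bound hd hn Ω c R hball K hK L hL hLip z hzΩ hzinj hmaxvol
  have hxx := hdiag x hx
  have hyy := hdiag y hy
  have hoff := resid_bound hK z hzΩ hzinj hx hy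
  set Δ : ℝ := (n : ℝ) ^ ((1 : ℝ) / (d : ℝ)) - 1 with hΔ
  have hΔpos : 0 < Δ := by
    rw [hΔ]
    have : (1:ℝ) < (n : ℝ) ^ ((1:ℝ)/(d:ℝ)) := by
      apply Real.one_lt_rpow_iff_of_pos (by positivity) |>.2
      refine Or.inl ⟨by exact_mod_cast hn, by positivity⟩
    linarith
  have hnn : 0 ≤ 4 * L * R / Δ := by positivity
  have heq : 8 * L * R / Δ = 4 * L * R / Δ + 4 * L * R / Δ := by ring
  linarith [hoff, hxx, hyy]
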